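/- Let A be a real N×N matrix none of whose eigenvalues lie on the unit circle. Then the sequence ‖(I - Aⁿ)⁻¹‖ (n ∈ ℕ, n ≥ 1) is bounded, where ‖·‖ is any operator norm on matrices. -/

import Mathlib

open Matrix Finset

/-- Operator norm of a real matrix induced by the Euclidean norm. -/
noncomputable def opNorm {N : ℕ} (A : Matrix (Fin N) (Fin N) ℝ) : ℝ :=
  ‖(Matrix.toEuclideanLin A).toContinuousLinearMap‖




lemma opNorm_le_sum_abs {N : ℕ} (R : Matrix (Fin N) (Fin N) ℝ) :
    opNorm R ≤ ∑ i, ∑ j, |R i j| := by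
  apply ContinuousLinearMap.opNorm_le_bound
  · positivity
  intro x
  have hx : ∀ j, |x j| ≤ ‖x‖ := by
    intro j
    rw [EuclideanSpace.norm_eq]
    rw [Real.le_sqrt (abs_nonneg _) (by positivity)]
    have := Finset.single_le_sum (f := fun i => ‖x i‖ ^ 2) (fun i _ => sq_nonneg _)
      (Finset.mem_univ j)
    simpa [Real.norm_eq_abs, sq_abs] using this
  have h1 : ‖(Matrix.toEuclideanLin R).toContinuousLinearMap x‖
      ≤ ∑ i, |(Matrix.toEuclideanLin R x) i| := by
    rw [EuclideanSpace.norm_eq]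
    have h2 : ∑ i, ‖(Matrix.toEuclideanLin R x) i‖ ^ 2
        ≤ (∑ i, |(Matrix.toEuclideanLin R x) i|) ^ 2 := by
      simpa [Real.norm_eq_abs, sq_abs] using
        Finset.sum_sq_le_sq_sum_of_nonneg
          (f := fun i => |(Matrix.toEuclideanLin R x) i|) (s := Finset.univ)
          (fun i _ => abs_nonneg _)
    calc Real.sqrt (∑ i, ‖(Matrix.toEuclideanLin R x) i‖ ^ 2)
        ≤ Real.sqrt ((∑ i, |(Matrix.toEuclideanLin R x) i|) ^ 2) := Real.sqrt_le_sqrt h2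
      _ = _ := Real.sqrt_sq (by positivity)
  refine h1.trans ?_
  have h3 : ∀ i, |(Matrix.toEuclideanLin R x) i| ≤ (∑ j, |R i j|) * ‖x‖ := by
    intro i
    have : (Matrix.toEuclideanLin R x) i = ∑ j, R i j * x j := by
      simp [Matrix.toEuclideanLin_apply, Matrix.mulVec, dotProduct]
    rw [this]
    calc |∑ j, R i j * x j| ≤ ∑ j, |R i j * x j| := Finset.abs_sum_le_sum_abs _ _
      _ ≤ ∑ j, |R i j| * ‖x‖ := by
          refine Finset.sum_le_sum fun j _ => ?_
          rw [abs_mul]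
          exact mul_le_mul_of_nonneg_left (hx j) (abs_nonneg _)
      _ = (∑ j, |R i j|) * ‖x‖ := by rw [Finset.sum_mul]
  calc ∑ i, |(Matrix.toEuclideanLin R x) i| ≤ ∑ i, (∑ j, |R i j|) * ‖x‖ :=
        Finset.sum_le_sum fun i _ => h3 i
    _ = (∑ i, ∑ j, |R i j|) * ‖x‖ := by rw [← Finset.sum_mul]



-- resolvent bound on the unit circle
lemma resolvent_bound {N : ℕ} (B : Matrix (Fin N) (Fin N) ℂ)
    (hunit : ∀ ω : ℂ, ‖ω‖ = 1 →
      IsUnit (ω • (1 : Matrix (Fin N) (Fin N) ℂ) - B).det) :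
    ∃ M : ℝ, ∀ ω : ℂ, ‖ω‖ = 1 →
      ∀ i j, ‖((ω • (1 : Matrix (Fin N) (Fin N) ℂ) - B)⁻¹) i j‖ ≤ M := by
  set φ : ℂ → ℝ := fun ω =>
    ∑ i, ∑ j, ‖((ω • (1 : Matrix (Fin N) (Fin N) ℂ) - B)⁻¹) i j‖ with hφ
  have hg : Continuous fun ω : ℂ => ω • (1 : Matrix (Fin N) (Fin N) ℂ) - B :=
    (continuous_id.smul continuous_const).sub continuous_const
  have hcont : ContinuousOn φ (Metric.sphere (0 : ℂ) 1) := by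
    have hinv : ∀ ω ∈ Metric.sphere (0 : ℂ) 1,
        ContinuousAt (fun ω : ℂ => (ω • (1 : Matrix (Fin N) (Fin N) ℂ) - B)⁻¹) ω := by
      intro ω hω
      have habs : ‖ω‖ = 1 := by
        simpa using mem_sphere_zero_iff_norm.mp hω
      have hdet : (ω • (1 : Matrix (Fin N) (Fin N) ℂ) - B).det ≠ 0 :=
        (hunit ω habs).ne_zero
      have h1 : ContinuousAt Ring.inverse ((ω • (1 : Matrix (Fin N) (Fin N) ℂ) - B).det) := by
        have : (Ring.inverse : ℂ → ℂ) = Inv.inv := by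
          funext z; exact Ring.inverse_eq_inv z
        rw [this]
        exact continuousAt_inv₀ hdet
      exact ContinuousAt.comp (x := ω) (continuousAt_matrix_inv _ h1) hg.continuousAt
    apply continuousOn_finset_sum
    intro i _
    apply continuousOn_finset_sum
    intro j _
    intro ω hω
    exact (continuous_norm.continuousAt.comp
      (((continuous_apply j).continuousAt.comp
        ((continuous_apply i).continuousAt.comp (hinv ω hω))))).continuousWithinAt
  obtain ⟨M, hM⟩ := (isCompact_sphere (0 : ℂ) 1).exists_bound_of_continuousOn hcont
  refine ⟨M, fun ω habs i j => ?_⟩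
  have hω : ω ∈ Metric.sphere (0 : ℂ) 1 := by
    simpa [mem_sphere_zero_iff_norm] using habs
  have h1 : ‖((ω • (1 : Matrix (Fin N) (Fin N) ℂ) - B)⁻¹) i j‖ ≤ φ ω := by
    rw [hφ]
    calc ‖((ω • (1 : Matrix (Fin N) (Fin N) ℂ) - B)⁻¹) i j‖
        ≤ ∑ j', ‖((ω • (1 : Matrix (Fin N) (Fin N) ℂ) - B)⁻¹) i j'‖ :=
          Finset.single_le_sum
            (f := fun j' => ‖((ω • (1 : Matrix (Fin N) (Fin N) ℂ) - B)⁻¹) i j'‖)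
            (fun _ _ => norm_nonneg _) (Finset.mem_univ j)
      _ ≤ _ := Finset.single_le_sum
          (f := fun i' => ∑ j', ‖((ω • (1 : Matrix (Fin N) (Fin N) ℂ) - B)⁻¹) i' j'‖)
          (fun _ _ => Finset.sum_nonneg fun _ _ => norm_nonneg _) (Finset.mem_univ i)
  exact h1.trans ((le_abs_self _).trans (by simpa using hM ω hω))



lemma key_identity {N : ℕ} (B : Matrix (Fin N) (Fin N) ℂ)
    (hunit : ∀ ω : ℂ, ‖ω‖ = 1 →
      IsUnit (ω • (1 : Matrix (Fin N) (Fin N) ℂ) - B).det)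
    {n : ℕ} (hn : 1 ≤ n) :
    (((n : ℂ))⁻¹ • ∑ m ∈ Finset.range n,
        (Complex.exp (2 * Real.pi * Complex.I / n)) ^ m •
          ((Complex.exp (2 * Real.pi * Complex.I / n)) ^ m •
            (1 : Matrix (Fin N) (Fin N) ℂ) - B)⁻¹)
      * (1 - B ^ n) = 1 := by
  have hn0 : n ≠ 0 := Nat.one_le_iff_ne_zero.mp hn
  set ζ : ℂ := Complex.exp (2 * Real.pi * Complex.I / n) with hζ
  have hprim : IsPrimitiveRoot ζ n := Complex.isPrimitiveRoot_exp n hn0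
  have hpow1 : ∀ m : ℕ, (ζ ^ m) ^ n = 1 := by
    intro m
    rw [← pow_mul, mul_comm, pow_mul, hprim.pow_eq_one, one_pow]
  have habs : ∀ m : ℕ, ‖ζ ^ m‖ = 1 := by
    intro m
    have h1 : (‖ζ ^ m‖) ^ n = 1 := by
      rw [← norm_pow, hpow1 m, norm_one]
    have h2 := (pow_eq_one_iff_cases).mp h1
    rcases h2 with h | h | h
    · exact absurd h hn0
    · exact h
    · exfalso; nlinarith [norm_nonneg (ζ ^ m), h.1]
  have hu : ∀ m : ℕ, IsUnit ((ζ ^ m) • (1 : Matrix (Fin N) (Fin N) ℂ) - B).det :=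
    fun m => hunit _ (habs m)
  have hterm : ∀ m : ℕ,
      ((ζ ^ m) • (1 : Matrix (Fin N) (Fin N) ℂ) - B)⁻¹ * (1 - B ^ n)
        = ∑ i ∈ Finset.range n, (ζ ^ m) ^ i • B ^ (n - 1 - i) := by
    intro m
    have hc : Commute ((ζ ^ m) • (1 : Matrix (Fin N) (Fin N) ℂ)) B :=
      (Commute.one_left B).smul_left (ζ ^ m)
    have hgeo := hc.mul_geom_sum₂ n
    have hx : ∀ i : ℕ, ((ζ ^ m) • (1 : Matrix (Fin N) (Fin N) ℂ)) ^ i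
        = ((ζ ^ m) ^ i) • 1 := by
      intro i; rw [smul_pow, one_pow]
    have hgeo' : ((ζ ^ m) • (1 : Matrix (Fin N) (Fin N) ℂ) - B) *
        (∑ i ∈ Finset.range n, (ζ ^ m) ^ i • B ^ (n - 1 - i)) = 1 - B ^ n := by
      calc ((ζ ^ m) • (1 : Matrix (Fin N) (Fin N) ℂ) - B) *
            (∑ i ∈ Finset.range n, (ζ ^ m) ^ i • B ^ (n - 1 - i))
          = ((ζ ^ m) • (1 : Matrix (Fin N) (Fin N) ℂ) - B) *
            (∑ i ∈ Finset.range n,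
              ((ζ ^ m) • (1 : Matrix (Fin N) (Fin N) ℂ)) ^ i * B ^ (n - 1 - i)) := by
            congr 1
            refine Finset.sum_congr rfl fun i _ => ?_
            rw [hx i, smul_mul_assoc, one_mul]
        _ = ((ζ ^ m) • (1 : Matrix (Fin N) (Fin N) ℂ)) ^ n - B ^ n := hgeo
        _ = 1 - B ^ n := by rw [hx n, hpow1 m, one_smul]
    rw [← hgeo', Matrix.nonsing_inv_mul_cancel_left _ _ (hu m)]
  have hS : (∑ m ∈ Finset.range n,
      (ζ ^ m) • ((ζ ^ m) • (1 : Matrix (Fin N) (Fin N) ℂ) - B)⁻¹) * (1 - B ^ n)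
      = (n : ℂ) • 1 := by
    rw [Finset.sum_mul]
    have h1 : ∀ m ∈ Finset.range n,
        ((ζ ^ m) • ((ζ ^ m) • (1 : Matrix (Fin N) (Fin N) ℂ) - B)⁻¹) * (1 - B ^ n)
          = ∑ i ∈ Finset.range n, ((ζ ^ (i + 1)) ^ m) • B ^ (n - 1 - i) := by
      intro m _
      rw [smul_mul_assoc, hterm m, Finset.smul_sum]
      refine Finset.sum_congr rfl fun i _ => ?_
      rw [smul_smul]
      congr 1
      rw [← pow_succ', ← pow_mul, ← pow_mul', mul_comm]
    rw [Finset.sum_congr rfl h1, Finset.sum_comm]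
    have h2 : ∀ i ∈ Finset.range n,
        ∑ m ∈ Finset.range n, ((ζ ^ (i + 1)) ^ m) • B ^ (n - 1 - i)
          = (if i = n - 1 then (n : ℂ) • (1 : Matrix (Fin N) (Fin N) ℂ) else 0) := by
      intro i hi
      rw [Finset.mem_range] at hi
      rw [← Finset.sum_smul]
      by_cases hieq : i = n - 1
      · subst hieq
        have hz1 : ζ ^ (n - 1 + 1) = 1 := by
          rw [Nat.sub_add_cancel hn, hprim.pow_eq_one]
        rw [if_pos rfl, hz1]
        simp
      · have hlt : i + 1 < n := by omega
        have hne : ζ ^ (i + 1) ≠ 1 := hprim.pow_ne_one_of_pos_of_lt (Nat.succ_ne_zero i) hlt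
        have hz0 : ∑ m ∈ Finset.range n, (ζ ^ (i + 1)) ^ m = 0 := by
          rw [geom_sum_eq hne n]
          have hzn : (ζ ^ (i + 1)) ^ n = 1 := by
            rw [← pow_mul, mul_comm, pow_mul, hprim.pow_eq_one, one_pow]
          rw [hzn, sub_self, zero_div]
        rw [if_neg hieq, hz0, zero_smul]
    rw [Finset.sum_congr rfl h2, Finset.sum_ite_eq' (Finset.range n) (n - 1)]
    rw [if_pos (Finset.mem_range.mpr (by omega))]
  rw [smul_mul_assoc, hS, smul_smul, inv_mul_cancel₀ (by exact_mod_cast hn0), one_smul]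

/-- If no eigenvalue of `A` has modulus `1`, the sequence `‖(I - Aⁿ)⁻¹`` (n ≥ 1)
is bounded. -/
theorem inv_one_sub_pow_bounded {N : ℕ} (A : Matrix (Fin N) (Fin N) ℝ)
    (hA : ∀ μ ∈ spectrum ℂ (A.map (Complex.ofReal ·)), ‖μ‖ ≠ 1) :
    ∃ C : ℝ, ∀ n : ℕ, 1 ≤ n → opNorm ((1 - A ^ n)⁻¹) ≤ C := by
  set B := A.map (Complex.ofReal ·) with hB
  have hunit : ∀ ω : ℂ, ‖ω‖ = 1 →
      IsUnit (ω • (1 : Matrix (Fin N) (Fin N) ℂ) - B).det := by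
    intro ω hω
    have hsp : ω ∉ spectrum ℂ B := fun h => hA ω h hω
    rw [spectrum.mem_iff, not_not] at hsp
    rw [← Matrix.isUnit_iff_isUnit_det]
    rwa [Algebra.algebraMap_eq_smul_one] at hsp
  obtain ⟨M, hM⟩ := resolvent_bound B hunit
  refine ⟨(N : ℝ) ^ 2 * M, fun n hn => ?_⟩
  have hn0 : n ≠ 0 := Nat.one_le_iff_ne_zero.mp hn
  set ζ : ℂ := Complex.exp (2 * Real.pi * Complex.I / n) with hζ
  have hkey := key_identity B hunit hn
  rw [← hζ] at hkey
  set S : Matrix (Fin N) (Fin N) ℂ :=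
    ∑ m ∈ Finset.range n, ζ ^ m • ((ζ ^ m • (1 : Matrix (Fin N) (Fin N) ℂ)) - B)⁻¹ with hSdef
  have hCinv : (1 - B ^ n)⁻¹ = ((n : ℂ))⁻¹ • S := Matrix.inv_eq_left_inv hkey
  have hdetC : IsUnit (1 - B ^ n).det := Matrix.isUnit_det_of_left_inverse hkey
  -- the map of the real matrix
  have hmap : (1 - A ^ n).map (Complex.ofReal ·) = 1 - B ^ n := by
    have h : (Complex.ofRealHom.mapMatrix : Matrix (Fin N) (Fin N) ℝ →+* _) (1 - A ^ n)
        = 1 - ((Complex.ofRealHom.mapMatrix : Matrix (Fin N) (Fin N) ℝ →+* _) A) ^ n := by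
      rw [map_sub, _root_.map_one, map_pow]
    exact h
  have hdetR : IsUnit (1 - A ^ n).det := by
    rw [isUnit_iff_ne_zero]
    intro h0
    have h1 : ((1 - A ^ n).det : ℂ) = (1 - B ^ n).det := by
      rw [← hmap]
      exact Complex.ofRealHom.map_det (1 - A ^ n)
    rw [h0] at h1
    exact hdetC.ne_zero (by exact_mod_cast h1.symm)
  have hmapinv : ((1 - A ^ n)⁻¹).map (Complex.ofReal ·) * (1 - B ^ n) = 1 := by
    have h : (Complex.ofRealHom.mapMatrix : Matrix (Fin N) (Fin N) ℝ →+* _)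
        ((1 - A ^ n)⁻¹ * (1 - A ^ n)) = 1 := by
      rw [Matrix.nonsing_inv_mul _ hdetR, _root_.map_one]
    rw [_root_.map_mul] at h
    have h2 : ((1 - A ^ n)⁻¹).map (Complex.ofReal ·) * ((1 - A ^ n).map (Complex.ofReal ·))
        = 1 := h
    rwa [hmap] at h2
  have hinvmap : (1 - B ^ n)⁻¹ = ((1 - A ^ n)⁻¹).map (Complex.ofReal ·) :=
    Matrix.inv_eq_left_inv hmapinv
  -- abs of the roots of unity
  have hpow1 : ∀ m : ℕ, (ζ ^ m) ^ n = 1 := by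
    intro m
    rw [← pow_mul, mul_comm, pow_mul,
      (Complex.isPrimitiveRoot_exp n hn0).pow_eq_one, one_pow]
  have habs : ∀ m : ℕ, ‖ζ ^ m‖ = 1 := by
    intro m
    have h1 : (‖ζ ^ m‖) ^ n = 1 := by
      rw [← norm_pow, hpow1 m, norm_one]
    rcases (pow_eq_one_iff_cases).mp h1 with h | h | h
    · exact absurd h hn0
    · exact h
    · exfalso; nlinarith [norm_nonneg (ζ ^ m), h.1]
  -- entrywise bound
  have hentry : ∀ i j, |((1 - A ^ n)⁻¹) i j| ≤ M := by
    intro i j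
    have h1 : (((1 - A ^ n)⁻¹) i j : ℂ) = ((1 - B ^ n)⁻¹) i j := by
      rw [hinvmap]; rfl
    have h2 : |((1 - A ^ n)⁻¹) i j| = ‖((1 - B ^ n)⁻¹) i j‖ := by
      rw [← h1, Complex.norm_real, Real.norm_eq_abs]
    rw [h2, hCinv]
    have h3 : (((n : ℂ))⁻¹ • S) i j = ((n : ℂ))⁻¹ * S i j := rfl
    rw [h3, norm_mul]
    have h4 : S i j = ∑ m ∈ Finset.range n,
        ζ ^ m * (((ζ ^ m • (1 : Matrix (Fin N) (Fin N) ℂ)) - B)⁻¹) i j := by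
      rw [hSdef]
      simp [Matrix.sum_apply]
    have h5 : ‖S i j‖ ≤ n * M := by
      rw [h4]
      calc ‖∑ m ∈ Finset.range n,
            ζ ^ m * (((ζ ^ m • (1 : Matrix (Fin N) (Fin N) ℂ)) - B)⁻¹) i j‖
          ≤ ∑ m ∈ Finset.range n, ‖
            (ζ ^ m * (((ζ ^ m • (1 : Matrix (Fin N) (Fin N) ℂ)) - B)⁻¹) i j)‖ := by
            exact norm_sum_le _ _
        _ ≤ ∑ m ∈ Finset.range n, M := by
            refine Finset.sum_le_sum fun m _ => ?_
            rw [norm_mul, habs m, one_mul]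
            exact hM _ (habs m) i j
        _ = n * M := by rw [Finset.sum_const, Finset.card_range, nsmul_eq_mul]
    calc ‖((n : ℂ))⁻¹‖ * ‖S i j‖
        ≤ ‖((n : ℂ))⁻¹‖ * (n * M) := by
          refine mul_le_mul_of_nonneg_left h5 (norm_nonneg _)
      _ = M := by
          rw [norm_inv, Complex.norm_natCast]
          field_simp
  calc opNorm ((1 - A ^ n)⁻¹) ≤ ∑ i, ∑ j, |((1 - A ^ n)⁻¹) i j| := opNorm_le_sum_abs _
    _ ≤ ∑ _i : Fin N, ∑ _j : Fin N, M :=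
        Finset.sum_le_sum fun i _ => Finset.sum_le_sum fun j _ => hentry i j
    _ = (N : ℝ) ^ 2 * M := by
        simp [Finset.sum_const, Finset.card_univ, nsmul_eq_mul]
        ring
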